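/- There exists S such that for all integers s ≥ S, setting n = 3s − 1, for every integer k with 0 < k < s − 1 one has f_{n,2k−1} + 2·f_{n,2k} + ∑_{i=2k+1}^{⌊(n+k)/2⌋} f_{n,i} − f_{n,n−k} < 0, where ⌊·⌋ denotes the integer part. -/

import Mathlib

open Polynomial

/-- `f_{n,i}`: the coefficient of `x^i` in `(1 + x + x²)^n`. -/
noncomputable def coeff3 (n i : ℕ) : ℕ :=
  (((1 + Polynomial.X + Polynomial.X ^ 2 : Polynomial ℕ)) ^ n).coeff i

noncomputable abbrev q3 : Polynomial ℕ := 1 + X + X ^ 2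

lemma coeff_q3_mul (R : Polynomial ℕ) (m : ℕ) :
    (q3 * R).coeff (m + 2) = R.coeff (m + 2) + R.coeff (m + 1) + R.coeff m := by
  have h : q3 * R = R + X * R + X ^ 2 * R := by ring
  rw [h, coeff_add, coeff_add]
  rw [show m + 2 = (m + 1) + 1 from rfl, coeff_X_mul]
  rw [show m + 1 + 1 = m + 2 from rfl, coeff_X_pow_mul]

lemma coeff_q3_mul_one (R : Polynomial ℕ) :
    (q3 * R).coeff 1 = R.coeff 1 + R.coeff 0 := by
  have h : q3 * R = R + X * R + R * X ^ 2 := by ring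
  rw [h, coeff_add, coeff_add, show (1:ℕ) = 0 + 1 from rfl, coeff_X_mul,
    coeff_mul_X_pow']
  simp

lemma coeff_q3_mul_zero (R : Polynomial ℕ) :
    (q3 * R).coeff 0 = R.coeff 0 := by
  have h : q3 * R = R + X * R + R * X ^ 2 := by ring
  rw [h, coeff_add, coeff_add, coeff_mul_X_pow']
  simp [coeff_X_mul_zero]

lemma coeff3_def (n i : ℕ) : coeff3 n i = (q3 ^ n).coeff i := rfl

lemma coeff3_succ (n i : ℕ) :
    coeff3 (n+1) (i+2) = coeff3 n (i+2) + coeff3 n (i+1) + coeff3 n i := by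
  simp only [coeff3_def, pow_succ, mul_comm (q3 ^ n) q3, coeff_q3_mul]

lemma coeff3_succ_one (n : ℕ) :
    coeff3 (n+1) 1 = coeff3 n 1 + coeff3 n 0 := by
  simp only [coeff3_def, pow_succ, mul_comm (q3 ^ n) q3, coeff_q3_mul_one]

lemma coeff3_zero (n : ℕ) : coeff3 n 0 = 1 := by
  induction n with
  | zero => simp [coeff3_def, Polynomial.coeff_one]
  | succ n ih =>
    have : coeff3 (n+1) 0 = coeff3 n 0 := by
      simp only [coeff3_def, pow_succ, mul_comm (q3 ^ n) q3, coeff_q3_mul_zero]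
    rw [this, ih]

lemma coeff3_one (n : ℕ) : coeff3 n 1 = n := by
  induction n with
  | zero => simp [coeff3_def, Polynomial.coeff_one]
  | succ n ih => rw [coeff3_succ_one, ih, coeff3_zero]

lemma coeff3_two (n : ℕ) : 2 * coeff3 n 2 = n * (n + 1) := by
  induction n with
  | zero => simp [coeff3_def, Polynomial.coeff_one]
  | succ n ih =>
    have h := coeff3_succ n 0
    have h1 := coeff3_one n
    have h0 := coeff3_zero n
    rw [h, h1, h0, Nat.mul_add, Nat.mul_add, ih]; ring

lemma coeff3_pos (n : ℕ) : ∀ i ≤ 2 * n, 0 < coeff3 n i := by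
  induction n with
  | zero => intro i hi; interval_cases i; simp [coeff3_def, Polynomial.coeff_one]
  | succ n ih =>
    intro i hi
    match i, hi with
    | 0, _ => simp [coeff3_zero]
    | 1, _ => simp [coeff3_one]
    | (j+2), hj =>
      rw [coeff3_succ]
      have : 0 < coeff3 n j := ih j (by omega)
      omega

lemma coeff_q3 (i : ℕ) : q3.coeff i = if i ≤ 2 then 1 else 0 := by
  rcases i with _|_|_|i <;>
    simp [coeff_one, coeff_X, coeff_X_pow, Nat.succ_le_iff]

lemma natDegree_q3 : q3.natDegree ≤ 2 := by
  show (1 + X + X ^ 2 : Polynomial ℕ).natDegree ≤ 2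
  compute_degree

lemma reflect_q3 : q3.reflect 2 = q3 := by
  ext i
  rw [coeff_reflect]
  by_cases h : i ≤ 2
  · rw [revAt_le h, coeff_q3, coeff_q3, if_pos h, if_pos (by omega)]
  · have : revAt 2 i = i := by
      unfold revAt
      exact if_neg h
    rw [this]

lemma reflect_q3_pow (n : ℕ) : (q3 ^ n).reflect (2 * n) = q3 ^ n := by
  induction n with
  | zero => simp
  | succ n ih =>
    have h : q3 ^ (n+1) = q3 * q3 ^ n := by ring
    rw [h, show 2 * (n+1) = 2 + 2 * n by ring,
      reflect_mul q3 (q3 ^ n) natDegree_q3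
        (natDegree_pow_le.trans (by have := natDegree_q3; nlinarith)),
      reflect_q3, ih]

lemma coeff3_symm (n : ℕ) {i : ℕ} (h : i ≤ 2 * n) :
    coeff3 n i = coeff3 n (2 * n - i) := by
  conv_lhs => rw [coeff3_def, ← reflect_q3_pow n, coeff_reflect, revAt_le h]
  rfl

lemma coeff3_mono (n : ℕ) : ∀ i, i < n → coeff3 n i ≤ coeff3 n (i + 1) := by
  induction n with
  | zero => intro i hi; omega
  | succ n ih =>
    intro i hi
    match i with
    | 0 =>
      rw [coeff3_zero, coeff3_one]; omega
    | 1 =>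
      have h2 := coeff3_succ n 0
      have h1 := coeff3_succ_one n
      simp only [Nat.zero_add] at h2
      have hgoal : coeff3 (n+1) 1 ≤ coeff3 (n+1) 2 := by omega
      exact hgoal
    | (j+2) =>
      have h1 := coeff3_succ n (j+1)
      have h2 := coeff3_succ n j
      simp only [show j+1+2 = j+3 from by omega, show j+1+1 = j+2 from by omega,
        show j+2+1 = j+3 from by omega] at h1 h2 ⊢
      have key : coeff3 n j ≤ coeff3 n (j + 3) := by
        rcases Nat.lt_or_ge (j+3) (n+1) with h' | h'
        · have hm1 := ih j (by omega)
          have hm2 := ih (j+1) (by omega)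
          have hm3 := ih (j+2) (by omega)
          simp only [show j+1+1 = j+2 from by omega,
            show j+2+1 = j+3 from by omega] at hm2 hm3
          omega
        · have hj : j + 2 = n := by omega
          have hn2 : n ≥ 2 := by omega
          have hsym : coeff3 n (n+1) = coeff3 n (n-1) := by
            have := coeff3_symm n (i := n+1) (by omega)
            rw [this]; congr 1; omega
          have hstep : coeff3 n (n-2) ≤ coeff3 n (n-1) := by
            have := ih (n-2) (by omega)
            have e : n - 2 + 1 = n - 1 := by omega
            rwa [e] at this
          have e1 : j = n - 2 := by omega
          have e2 : j + 3 = n + 1 := by omega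
          rw [e2, e1, hsym]; exact hstep
      omega

lemma coeff3_mono' (n : ℕ) {a b : ℕ} (hab : a ≤ b) (hb : b ≤ n) :
    coeff3 n a ≤ coeff3 n b := by
  induction b with
  | zero =>
    have : a = 0 := by omega
    simp [this]
  | succ b ihb =>
    rcases Nat.lt_or_ge a (b+1) with h | h
    · exact (ihb (by omega) (by omega)).trans (coeff3_mono n b (by omega))
    · have : a = b + 1 := by omega
      simp [this]

lemma deriv_q3 : derivative q3 = 1 + C 2 * X := by
  show derivative (1 + X + X ^ 2 : Polynomial ℕ) = 1 + C 2 * X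
  simp [derivative_X_pow]

lemma coeff3_deriv (n m : ℕ) :
    (m+3) * coeff3 n (m+3) + (m+2) * coeff3 n (m+2) + (m+1) * coeff3 n (m+1)
      = n * coeff3 n (m+2) + 2 * n * coeff3 n (m+1) := by
  rcases n with _ | n'
  · simp [coeff3_def, Polynomial.coeff_one]
  set n := n' + 1
  have key : q3 * derivative (q3 ^ n) = C (n:ℕ) * ((1 + C 2 * X) * q3 ^ n) := by
    rw [derivative_pow, deriv_q3, show n - 1 = n' from rfl]
    calc q3 * (C (n:ℕ) * q3 ^ n' * (1 + C 2 * X))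
        = C (n:ℕ) * ((1 + C 2 * X) * (q3 ^ n' * q3)) := by ring
      _ = C (n:ℕ) * ((1 + C 2 * X) * q3 ^ n) := by rw [← pow_succ]
  have hc := congrArg (fun p => p.coeff (m+2)) key
  rw [coeff_q3_mul] at hc
  have expand : (1 + C 2 * X) * q3 ^ n = q3 ^ n + C 2 * (X * q3 ^ n) := by ring
  rw [coeff_C_mul, expand, coeff_add, coeff_C_mul,
    show m + 2 = (m+1)+1 from rfl, coeff_X_mul] at hc
  simp only [coeff_derivative] at hc
  show (m+3) * (q3^n).coeff (m+3) + (m+2) * (q3^n).coeff (m+2) + (m+1) * (q3^n).coeff (m+1)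
      = n * (q3^n).coeff (m+2) + 2 * n * (q3^n).coeff (m+1)
  push_cast at hc
  nlinarith [hc]

set_option maxHeartbeats 1000000 in
lemma coeff3_ratio {s : ℕ} (hs : 40 ≤ s) :
    ∀ i, i ≤ 2 * s → 8 * coeff3 (3*s-1) i ≤ 5 * coeff3 (3*s-1) (i+1) := by
  intro i
  induction i using Nat.strong_induction_on with
  | _ i IH =>
    intro hi
    set n : ℕ := 3 * s - 1 with hn
    have hnn : n = 3 * s - 1 := hn
    have hnZ : (n:ℤ) = 3*(s:ℤ) - 1 := by omega
    have hsZ : (40:ℤ) ≤ (s:ℤ) := by exact_mod_cast hs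
    rcases i with _ | _ | _ | l
    · -- i = 0
      rw [coeff3_zero, coeff3_one]
      omega
    · -- i = 1
      have h2 := coeff3_two n
      have h1 := coeff3_one n
      zify at h2 h1 ⊢
      nlinarith [h2, h1, hnZ, hsZ]
    · -- i = 2
      have hd := coeff3_deriv n 0
      have h2 := coeff3_two n
      have h1 := coeff3_one n
      norm_num at hd
      zify at hd h2 h1 ⊢
      set b : ℤ := (coeff3 n 2 : ℤ) with hb
      have hb0 : 0 ≤ b := by positivity
      nlinarith [hd, h2, h1, hnZ, hsZ, hb0, mul_nonneg (show (0:ℤ) ≤ 5*(n:ℤ) - 34 by omega) hb0]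
    · -- i = l + 3, use IH at l + 1
      have hIH : 8 * coeff3 n (l+1) ≤ 5 * coeff3 n (l+2) := by
        have := IH (l+1) (by omega) (by omega)
        simpa using this
      have hA := coeff3_deriv n l
      have hB := coeff3_deriv n (l+1)
      simp only [show l+1+3 = l+4 from by omega, show l+1+2 = l+3 from by omega,
        show l+1+1 = l+2 from by omega] at hB
      zify at hA hB hIH ⊢
      set N : ℤ := (n:ℤ)
      set L : ℤ := (l:ℤ) with hL
      set a : ℤ := (coeff3 n (l+1) : ℤ)
      set b : ℤ := (coeff3 n (l+2) : ℤ)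
      set c : ℤ := (coeff3 n (l+3) : ℤ)
      set d : ℤ := (coeff3 n (l+4) : ℤ)
      have ha0 : 0 ≤ a := by positivity
      have hb0 : 0 ≤ b := by positivity
      have hc0 : 0 ≤ c := by positivity
      have hd0 : 0 ≤ d := by positivity
      have hL0 : 0 ≤ L := by positivity
      have hLs : L + 3 ≤ 2 * (s:ℤ) := by
        have : (l:ℤ) + 3 ≤ 2*(s:ℤ) := by exact_mod_cast hi
        omega
      have hNs : N = 3*(s:ℤ) - 1 := hnZ
      set Dd : ℤ := 8*(N - L - 2) + 5*(2*N - L - 1) with hDd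
      -- step 1 : 8*(L+3)*c ≤ Dd * b
      have hA' : (L+3) * c = (N-L-2) * b + (2*N-L-1) * a := by linarith [hA]
      have haux : (2*N - L - 1) * (8*a) ≤ (2*N - L - 1) * (5*b) :=
        mul_le_mul_of_nonneg_left hIH (by omega)
      have h1 : 8*((L+3)*c) ≤ Dd * b := by rw [hDd]; nlinarith [hA', haux]
      -- step 2 : recurrence at l+1
      have hB' : (L+4) * d = (N-L-3) * c + (2*N-L-2) * b := by linarith [hB]
      have e1 : 5*Dd*((L+4)*d) = 5*Dd*(N-L-3)*c + 5*Dd*(2*N-L-2)*b := by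
        rw [hB']; ring
      have e2 : 5*(2*N-L-2) * (8*((L+3)*c)) ≤ 5*(2*N-L-2) * (Dd*b) :=
        mul_le_mul_of_nonneg_left h1 (by omega)
      -- the polynomial certificate D2 ≥ 0
      have cert1 : (0:ℤ) ≤ (2*(s:ℤ) - 3 - L) * (399*(s:ℤ) - 516 - 129*L) :=
        mul_nonneg (by omega) (by omega)
      have cert2 : (0:ℤ) ≤ 12*(s:ℤ)*((s:ℤ) - 37) :=
        mul_nonneg (by omega) (by omega)
      have e3 : 0 ≤ (5*Dd*(N-L-3) + 40*(2*N-L-2)*(L+3) - 8*Dd*(L+4)) * c := by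
        apply mul_nonneg _ hc0
        rw [hDd, hNs]
        linarith [cert1, cert2]
      have e4 : (Dd*(L+4)) * (8*c) ≤ (Dd*(L+4)) * (5*d) := by linarith [e1, e2, e3]
      have hpos : (0:ℤ) < Dd*(L+4) := by
        have d1 : (0:ℤ) < Dd := by rw [hDd, hNs]; omega
        have d2 : (0:ℤ) < L + 4 := by omega
        exact mul_pos d1 d2
      have := (mul_le_mul_iff_right₀ hpos).mp e4
      linarith [this]

lemma coeff3_sum {s : ℕ} (hs : 40 ≤ s) :
    ∀ m, m ≤ 2 * s →
      3 * ∑ i ∈ Finset.range (m+1), coeff3 (3*s-1) i ≤ 8 * coeff3 (3*s-1) m := by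
  intro m
  induction m with
  | zero => intro _; simp [coeff3_zero]
  | succ m ih =>
    intro hm
    rw [Finset.sum_range_succ]
    have h1 := ih (by omega)
    have h2 := coeff3_ratio hs m (by omega)
    omega

/-- For `n = 3s - 1` with `s` large and `0 < k < s - 1`,
`f_{n,2k-1} + 2 f_{n,2k} + ∑_{i=2k+1}^{⌊(n+k)/2⌋} f_{n,i} - f_{n,n-k} < 0`. -/
theorem ineq_three_s_sub_one :
    ∃ S : ℕ, ∀ s : ℕ, S ≤ s → ∀ k : ℕ, 0 < k → k < s - 1 →
      (coeff3 (3 * s - 1) (2 * k - 1) : ℤ) + 2 * (coeff3 (3 * s - 1) (2 * k) : ℤ) +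
          (∑ i ∈ Finset.Icc (2 * k + 1) (((3 * s - 1) + k) / 2),
            (coeff3 (3 * s - 1) i : ℤ)) -
          (coeff3 (3 * s - 1) ((3 * s - 1) - k) : ℤ) < 0 := by
  refine ⟨40, fun s hs k hk hks => ?_⟩
  have hk2 : k ≤ s - 2 := by omega
  set n : ℕ := 3 * s - 1 with hn
  set M : ℕ := (3 * s - 1 + k) / 2 with hM
  have hMg : (3 * s - 1 + k) / 2 = M := rfl
  have hM1 : 2*k + 2 ≤ M := by omega
  have hM2 : M + 3 ≤ n - k := by omega
  have hM3 : M ≤ 2*s - 2 := by omega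
  have hns : n = 3 * s - 1 := rfl
  -- t1 : g(2k-1) ≤ g(2k)
  have t1 : coeff3 n (2*k-1) ≤ coeff3 n (2*k) := by
    have h := coeff3_ratio hs (2*k-1) (by omega)
    rw [show 2*k-1+1 = 2*k from by omega] at h
    simp only [← hn] at h
    omega
  -- t2 : 64 g(2k) ≤ 25 g(M)
  have t2 : 64 * coeff3 n (2*k) ≤ 25 * coeff3 n M := by
    have h1 := coeff3_ratio hs (2*k) (by omega)
    have h2 := coeff3_ratio hs (2*k+1) (by omega)
    have h3 : coeff3 n (2*k+1+1) ≤ coeff3 n M := coeff3_mono' n (by omega) (by omega)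
    simp only [← hn] at h1 h2 h3
    omega
  -- t3 : partial sums
  have t3 : 3 * ∑ i ∈ Finset.range (M+1), coeff3 n i ≤ 8 * coeff3 n M :=
    coeff3_sum hs M (by omega)
  have t3b : ∑ i ∈ Finset.Icc (2*k+1) M, coeff3 n i
      ≤ ∑ i ∈ Finset.range (M+1), coeff3 n i := by
    apply Finset.sum_le_sum_of_subset
    intro x hx
    simp only [Finset.mem_Icc] at hx
    simp only [Finset.mem_range]
    omega
  -- t4 : 512 g(M) ≤ 125 g(M+3)
  have t4 : 512 * coeff3 n M ≤ 125 * coeff3 n (M+3) := by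
    have h1 := coeff3_ratio hs M (by omega)
    have h2 := coeff3_ratio hs (M+1) (by omega)
    have h3 := coeff3_ratio hs (M+2) (by omega)
    simp only [show M+1+1 = M+2 from by omega, show M+2+1 = M+3 from by omega] at h2 h3
    simp only [← hn] at h1 h2 h3
    omega
  -- t5 : g(M+3) ≤ g(n-k)
  have t5 : coeff3 n (M+3) ≤ coeff3 n (n-k) := coeff3_mono' n (by omega) (by omega)
  -- t6 : 1 ≤ g(M)
  have t6 : 1 ≤ coeff3 n M := coeff3_pos n M (by omega)
  have hcast : (∑ i ∈ Finset.Icc (2*k+1) M, (coeff3 n i : ℤ))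
      = ((∑ i ∈ Finset.Icc (2*k+1) M, coeff3 n i : ℕ) : ℤ) := by push_cast; rfl
  rw [hcast]
  zify at t1 t2 t3 t3b t4 t5 t6
  linarith [t1, t2, t3, t3b, t4, t5, t6]
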